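/- Let m ≥ 1, t > 0 and h ∈ ℝ^m, and set w = |h|/(2√t). Then ∫_{ℝ^m} |K_t(x + h) - K_t(x)| dx = π^{-1/2} ∫_{-∞}^{∞} |e^{-(s + w/2)²} - e^{-(s - w/2)²}| ds, where K_t(x) = (4πt)^{-m/2} e^{-|x|²/(4t)}. -/

import Mathlib

open MeasureTheory
open Real

lemma aux_gauss_int (t : ℝ) (ht : 0 < t) :
    ∫ x : ℝ, (4 * π * t) ^ (-(1:ℝ)/2) * Real.exp (-x ^ 2 / (4 * t)) = 1 := by
  have h4t : (0:ℝ) < 4 * π * t := by positivity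
  have heq : (fun x : ℝ => Real.exp (-x ^ 2 / (4 * t)))
      = fun x : ℝ => Real.exp (-(4*t)⁻¹ * x ^ 2) := by
    funext x; congr 1; field_simp
  rw [integral_const_mul, heq, integral_gaussian]
  have : π / (4*t)⁻¹ = 4 * π * t := by field_simp
  rw [this, sqrt_eq_rpow, ← Real.rpow_add h4t]
  norm_num

lemma aux_1d (t : ℝ) (ht : 0 < t) (a : ℝ) :
    ∫ x : ℝ, |Real.exp (-(x + a) ^ 2 / (4 * t)) - Real.exp (-x ^ 2 / (4 * t))|
      = (2 * Real.sqrt t) *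
        ∫ s : ℝ, |Real.exp (-(s + (a / (2 * Real.sqrt t)) / 2) ^ 2) -
          Real.exp (-(s - (a / (2 * Real.sqrt t)) / 2) ^ 2)| := by
  have hst : (0:ℝ) < Real.sqrt t := Real.sqrt_pos.2 ht
  have hsq : Real.sqrt t ^ 2 = t := Real.sq_sqrt ht.le
  set w : ℝ := a / (2 * Real.sqrt t) with hw
  set g : ℝ → ℝ := fun s => |Real.exp (-(s + w / 2) ^ 2) - Real.exp (-(s - w / 2) ^ 2)| with hg
  have key : ∀ x : ℝ, |Real.exp (-(x + a) ^ 2 / (4 * t)) - Real.exp (-x ^ 2 / (4 * t))|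
      = g ((x + a/2) * (2 * Real.sqrt t)⁻¹) := by
    intro x
    have h1 : ((x + a/2) * (2 * Real.sqrt t)⁻¹ + w / 2) ^ 2 = (x + a) ^ 2 / (4 * t) := by
      rw [hw]; field_simp
      linear_combination (-16*(2*x*a + x^2 + a^2)) * hsq
    have h2 : ((x + a/2) * (2 * Real.sqrt t)⁻¹ - w / 2) ^ 2 = x ^ 2 / (4 * t) := by
      rw [hw]; field_simp
      linear_combination (-16*x^2) * hsq
    simp only [hg, h1, h2, neg_div]
  simp_rw [key]
  rw [integral_add_right_eq_self (fun x => g (x * (2 * Real.sqrt t)⁻¹)) (a/2),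
    Measure.integral_comp_mul_right g, inv_inv,
    abs_of_pos (by positivity : (0:ℝ) < 2 * Real.sqrt t), smul_eq_mul]


/-- The Gaussian heat kernel `K_t(x) = (4πt)^{-m/2} e^{-|x|²/(4t)}` on `ℝ^m`. -/
noncomputable def heatKernel (m : ℕ) (t : ℝ) (x : EuclideanSpace ℝ (Fin m)) : ℝ :=
  (4 * Real.pi * t) ^ (-(m : ℝ) / 2) * Real.exp (-‖x‖ ^ 2 / (4 * t))

/-- for `m ≥ 1`, `t > 0`, `h ∈ ℝ^m` and `w = |h|/(2√t)`,
`∫ |K_t(x+h) - K_t(x)| dx = π^{-1/2} ∫_ℝ |e^{-(s+w/2)²} - e^{-(s-w/2)²}| ds`. -/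
theorem stmt15 (m : ℕ) (hm : 1 ≤ m) (t : ℝ) (ht : 0 < t)
    (h : EuclideanSpace ℝ (Fin m)) :
    (∫ x : EuclideanSpace ℝ (Fin m), |heatKernel m t (x + h) - heatKernel m t x|)
      = Real.pi ^ (-(1 : ℝ) / 2) *
        ∫ s : ℝ, |Real.exp (-(s + (‖h‖ / (2 * Real.sqrt t)) / 2) ^ 2) -
          Real.exp (-(s - (‖h‖ / (2 * Real.sqrt t)) / 2) ^ 2)| := by
  have h4t : (0:ℝ) < 4 * π * t := by positivity
  set c : ℝ := (4 * π * t) ^ (-(1:ℝ)/2) with hc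
  have hc0 : (0:ℝ) ≤ c := Real.rpow_nonneg h4t.le _
  set a : ℝ := ‖h‖ with ha
  have ha0 : (0:ℝ) ≤ a := norm_nonneg h
  let i0 : Fin m := ⟨0, hm⟩
  set h' : EuclideanSpace ℝ (Fin m) := EuclideanSpace.single i0 a with hh'
  have hnorm' : ‖h'‖ = ‖h‖ := by
    rw [hh', EuclideanSpace.norm_single, Real.norm_eq_abs, abs_of_nonneg ha0]
  -- product formula for the heat kernel
  have hnormsq : ∀ z : EuclideanSpace ℝ (Fin m), ‖z‖^2 = ∑ i, (z i)^2 := by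
    intro z
    rw [PiLp.norm_sq_eq_of_L2]
    simp [Real.norm_eq_abs, sq_abs]
  have prodform : ∀ z : EuclideanSpace ℝ (Fin m),
      heatKernel m t z = ∏ i, c * Real.exp (-(z i)^2 / (4*t)) := by
    intro z
    simp only [heatKernel]
    rw [hnormsq, Finset.prod_mul_distrib, Finset.prod_const, Finset.card_univ,
      Fintype.card_fin]
    congr 1
    · rw [hc, ← Real.rpow_natCast ((4*π*t) ^ (-(1:ℝ)/2)) m, ← Real.rpow_mul h4t.le]
      congr 1; ring
    · rw [← Real.exp_sum]
      congr 1
      simp only [neg_div]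
      rw [Finset.sum_neg_distrib, ← Finset.sum_div]
  -- rotation step
  set R := Submodule.reflection (ℝ ∙ (h' - h))ᗮ with hRdef
  have hRh' : R h' = h := Submodule.reflection_sub hnorm'
  have step1 : (∫ x : EuclideanSpace ℝ (Fin m), |heatKernel m t (x + h) - heatKernel m t x|)
      = ∫ x : EuclideanSpace ℝ (Fin m), |heatKernel m t (x + h') - heatKernel m t x| := by
    have hme : MeasurableEmbedding R := R.toHomeomorph.measurableEmbedding
    rw [← R.measurePreserving.integral_comp hme
      (fun y => |heatKernel m t (y + h) - heatKernel m t y|)]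
    congr 1; funext x
    have h1 : heatKernel m t (R x + h) = heatKernel m t (x + h') := by
      rw [← hRh', ← map_add]
      simp only [heatKernel, LinearIsometryEquiv.norm_map]
    have h2 : heatKernel m t (R x) = heatKernel m t x := by
      simp only [heatKernel, LinearIsometryEquiv.norm_map]
    rw [h1, h2]
  set f : Fin m → ℝ → ℝ := fun i s =>
    c * (if i = i0 then |Real.exp (-(s+a)^2/(4*t)) - Real.exp (-s^2/(4*t))|
      else Real.exp (-s^2/(4*t))) with hf
  have claim1 : ∀ y : EuclideanSpace ℝ (Fin m),
      |heatKernel m t (y + h') - heatKernel m t y| = ∏ i, f i (y i) := by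
    intro y
    have e0 : (y + h') i0 = y i0 + a := by
      simp [hh', PiLp.add_apply, EuclideanSpace.single_apply]
    have ee : ∀ i ∈ Finset.univ.erase i0,
        c * Real.exp (-((y + h') i)^2/(4*t)) = c * Real.exp (-(y i)^2/(4*t)) := by
      intro i hi
      have hne : i ≠ i0 := (Finset.mem_erase.1 hi).1
      have : (y + h') i = y i := by
        simp [hh', PiLp.add_apply, EuclideanSpace.single_apply, hne]
      rw [this]
    have hP : (0:ℝ) ≤ ∏ i ∈ Finset.univ.erase i0, c * Real.exp (-(y i)^2/(4*t)) :=
      Finset.prod_nonneg (fun i _ => by positivity)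
    calc |heatKernel m t (y + h') - heatKernel m t y|
        = |(c * Real.exp (-(y i0 + a)^2/(4*t)) - c * Real.exp (-(y i0)^2/(4*t)))
            * ∏ i ∈ Finset.univ.erase i0, c * Real.exp (-(y i)^2/(4*t))| := by
          rw [prodform, prodform,
            ← Finset.mul_prod_erase _ (fun i => c * Real.exp (-((y + h') i)^2/(4*t)))
              (Finset.mem_univ i0),
            ← Finset.mul_prod_erase _ (fun i => c * Real.exp (-(y i)^2/(4*t)))
              (Finset.mem_univ i0),
            Finset.prod_congr rfl ee, e0, sub_mul]
      _ = (c * |Real.exp (-(y i0 + a)^2/(4*t)) - Real.exp (-(y i0)^2/(4*t))|)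
            * ∏ i ∈ Finset.univ.erase i0, c * Real.exp (-(y i)^2/(4*t)) := by
          rw [abs_mul, abs_of_nonneg hP, ← mul_sub, abs_mul, abs_of_nonneg hc0]
      _ = ∏ i, f i (y i) := by
          rw [← Finset.mul_prod_erase _ (fun i => f i (y i)) (Finset.mem_univ i0),
            Finset.prod_congr rfl (fun i hi =>
              show f i (y i) = c * Real.exp (-(y i)^2/(4*t)) from by
                simp [hf, (Finset.mem_erase.1 hi).1])]
          simp [hf]
  have step2 : (∫ y : EuclideanSpace ℝ (Fin m), ∏ i, f i (y i)) = ∏ i, ∫ s : ℝ, f i s := by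
    have hmp : MeasurePreserving (MeasurableEquiv.toLp 2 (Fin m → ℝ))
        volume volume := (EuclideanSpace.volume_preserving_symm_measurableEquiv_toLp (Fin m)).symm
    rw [← hmp.integral_comp' (fun y : EuclideanSpace ℝ (Fin m) => ∏ i, f i (y i))]
    exact integral_fintype_prod_eq_prod (ι := Fin m) f
  have step3 : (∏ i, ∫ s : ℝ, f i s)
      = c * ∫ x : ℝ, |Real.exp (-(x + a)^2/(4*t)) - Real.exp (-x^2/(4*t))| := by
    rw [← Finset.mul_prod_erase _ (fun i => ∫ s : ℝ, f i s) (Finset.mem_univ i0)]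
    have h1 : ∀ i ∈ Finset.univ.erase i0, (∫ s : ℝ, f i s) = 1 := by
      intro i hi
      have hne : i ≠ i0 := (Finset.mem_erase.1 hi).1
      simp only [hf, hne, if_false]
      rw [hc]
      exact aux_gauss_int t ht
    rw [Finset.prod_congr rfl h1, Finset.prod_const_one, mul_one]
    simp only [hf, eq_self_iff_true, ite_true, if_true]
    rw [integral_const_mul]
  have hconst : c * (2 * Real.sqrt t) = π ^ (-(1:ℝ)/2) := by
    have hspi : (0:ℝ) < Real.sqrt π := Real.sqrt_pos.2 Real.pi_pos
    have hst : (0:ℝ) < Real.sqrt t := Real.sqrt_pos.2 ht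
    have h4 : Real.sqrt (4 * π * t) = 2 * Real.sqrt π * Real.sqrt t := by
      rw [Real.sqrt_mul (by positivity) t, Real.sqrt_mul (by norm_num : (0:ℝ) ≤ 4),
        show (4:ℝ) = 2^2 by norm_num, Real.sqrt_sq (by norm_num : (0:ℝ) ≤ 2)]
    rw [hc, show (-(1:ℝ)/2) = -(1/2) by norm_num, Real.rpow_neg h4t.le,
      Real.rpow_neg Real.pi_pos.le, ← Real.sqrt_eq_rpow, ← Real.sqrt_eq_rpow, h4]
    field_simp
  calc (∫ x : EuclideanSpace ℝ (Fin m), |heatKernel m t (x + h) - heatKernel m t x|)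
      = ∫ x : EuclideanSpace ℝ (Fin m), |heatKernel m t (x + h') - heatKernel m t x| := step1
    _ = ∫ y : EuclideanSpace ℝ (Fin m), ∏ i, f i (y i) := by simp_rw [claim1]
    _ = ∏ i, ∫ s : ℝ, f i s := step2
    _ = c * ∫ x : ℝ, |Real.exp (-(x + a)^2/(4*t)) - Real.exp (-x^2/(4*t))| := step3
    _ = c * ((2 * Real.sqrt t) * ∫ s : ℝ, |Real.exp (-(s + (a / (2 * Real.sqrt t)) / 2) ^ 2) -
          Real.exp (-(s - (a / (2 * Real.sqrt t)) / 2) ^ 2)|) := by rw [aux_1d t ht a]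
    _ = π ^ (-(1:ℝ)/2) * ∫ s : ℝ, |Real.exp (-(s + (a / (2 * Real.sqrt t)) / 2) ^ 2) -
          Real.exp (-(s - (a / (2 * Real.sqrt t)) / 2) ^ 2)| := by rw [← mul_assoc, hconst]
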